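/- Fix positive integers k, t with k ≥ t+2. Define m_{i,j} for i, j ≥ 1 by: m_{i,j} is the sum of weights of partial (k-t-1, t)-Motzkin paths of length i-1 ending at height j-1. Then for all i ≥ 1, ∑_{j=1}^{i} m_{i,j} · (1 + t + t² + ... + t^{j-1}) = k^{i-1}. -/

import Mathlib

/-- A Motzkin step: up, down, or horizontal. -/
inductive Step | U | D | H
deriving DecidableEq

instance instFintypeStep : Fintype Step :=
  ⟨{Step.U, Step.D, Step.H}, fun x => by cases x <;> simp⟩

/-- The height change of one step. -/
def Step.val : Step → ℤ
  | Step.U => 1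
  | Step.D => -1
  | Step.H => 0

/-- The weight of a step: up steps weigh `1`, down steps `t`, horizontal steps `k`. -/
def Step.wt (k t : ℕ) : Step → ℕ
  | Step.U => 1
  | Step.D => t
  | Step.H => k

/-- The height of the path `p` after its first `m` steps. -/
def pathHeight {n : ℕ} (p : Fin n → Step) (m : ℕ) : ℤ :=
  ∑ i ∈ Finset.univ.filter (fun i : Fin n => (i : ℕ) < m), (p i).val

/-- A partial Motzkin path: never goes below the x-axis. -/
def IsPartialMotzkin {n : ℕ} (p : Fin n → Step) : Prop :=
  ∀ m ≤ n, 0 ≤ pathHeight p m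

/-- A (complete) Motzkin path: never below the x-axis and ends on the x-axis. -/
def IsMotzkin {n : ℕ} (p : Fin n → Step) : Prop :=
  IsPartialMotzkin p ∧ pathHeight p n = 0

instance {n : ℕ} (p : Fin n → Step) : Decidable (IsPartialMotzkin p) :=
  Nat.decidableBallLE n _

instance {n : ℕ} (p : Fin n → Step) : Decidable (IsMotzkin p) :=
  inferInstanceAs (Decidable (_ ∧ _))

/-- The weight of a weighted Motzkin path. -/
def pathWt {n : ℕ} (k t : ℕ) (p : Fin n → Step) : ℕ := ∏ i, (p i).wt k t

/-- Sum of the weights of all `(k,t)`-Motzkin paths of length `n`. -/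
def motzkinWt (k t n : ℕ) : ℕ :=
  ∑ p ∈ Finset.univ.filter (fun p : Fin n → Step => IsMotzkin p), pathWt k t p

/-- Sum of the weights of all partial `(k,t)`-Motzkin paths of length `n`
ending at height `h`. -/
def partialWt (k t n h : ℕ) : ℕ :=
  ∑ p ∈ Finset.univ.filter
      (fun p : Fin n → Step => IsPartialMotzkin p ∧ pathHeight p n = (h : ℤ)),
    pathWt k t p

-- lemmas
lemma sum_step {M : Type*} [AddCommMonoid M] (f : Step → M) :
    ∑ s : Step, f s = f .U + f .D + f .H := by
  rw [show (Finset.univ : Finset Step) = {Step.U, Step.D, Step.H} from rfl]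
  rw [Finset.sum_insert (by decide), Finset.sum_insert (by decide), Finset.sum_singleton, add_assoc]

lemma pathHeight_eq {n : ℕ} (p : Fin n → Step) (m : ℕ) :
    pathHeight p m = ∑ i : Fin n, if (i : ℕ) < m then (p i).val else 0 :=
  Finset.sum_filter _ _

lemma pathHeight_of_le {n m : ℕ} (q : Fin n → Step) (h : n ≤ m) :
    pathHeight q m = ∑ i, (q i).val := by
  rw [pathHeight]
  congr 1
  rw [Finset.filter_true_of_mem]
  exact fun i _ => lt_of_lt_of_le i.isLt h

lemma pathHeight_snoc_of_le {n : ℕ} (q : Fin n → Step) (s : Step) {m : ℕ} (hm : m ≤ n) :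
    pathHeight (Fin.snoc q s) m = pathHeight q m := by
  rw [pathHeight_eq, pathHeight_eq, Fin.sum_univ_castSucc]
  simp only [Fin.snoc_castSucc, Fin.snoc_last, Fin.coe_castSucc, Fin.val_last]
  rw [if_neg (by omega), add_zero]

lemma pathHeight_snoc_top {n : ℕ} (q : Fin n → Step) (s : Step) :
    pathHeight (Fin.snoc q s) (n + 1) = pathHeight q n + s.val := by
  rw [pathHeight_of_le _ le_rfl, pathHeight_of_le _ le_rfl, Fin.sum_univ_castSucc]
  simp

lemma isPartial_snoc {n : ℕ} (q : Fin n → Step) (s : Step) :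
    IsPartialMotzkin (Fin.snoc q s) ↔ IsPartialMotzkin q ∧ 0 ≤ pathHeight q n + s.val := by
  constructor
  · intro H
    refine ⟨fun m hm => ?_, ?_⟩
    · rw [← pathHeight_snoc_of_le q s hm]; exact H m (by omega)
    · rw [← pathHeight_snoc_top]; exact H (n + 1) le_rfl
  · rintro ⟨H, h2⟩ m hm
    rcases Nat.lt_or_ge m (n + 1) with h | h
    · rw [pathHeight_snoc_of_le q s (by omega)]; exact H m (by omega)
    · have : m = n + 1 := by omega
      subst this; rw [pathHeight_snoc_top]; exact h2

lemma pathWt_snoc {n : ℕ} (a t : ℕ) (q : Fin n → Step) (s : Step) :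
    pathWt a t (Fin.snoc q s) = pathWt a t q * s.wt a t := by
  rw [pathWt, pathWt, Fin.prod_univ_castSucc]
  simp

lemma pathHeight_le {n : ℕ} (q : Fin n → Step) : pathHeight q n ≤ n := by
  rw [pathHeight_of_le _ le_rfl]
  calc ∑ i, (q i).val ≤ ∑ _i : Fin n, (1 : ℤ) :=
        Finset.sum_le_sum (fun i _ => by cases q i <;> simp [Step.val])
    _ = n := by simp

def snocE (n : ℕ) : ((Fin n → Step) × Step) ≃ (Fin (n+1) → Step) where
  toFun x := Fin.snoc x.1 x.2
  invFun p := (fun i => p i.castSucc, p (Fin.last n))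
  left_inv x := by simp
  right_inv p := by simp [Fin.snoc_castSucc]; exact funext (Fin.lastCases (by simp) (by simp))

lemma key (a t : ℕ) (n : ℕ) :
    ∑ p : Fin n → Step, (if IsPartialMotzkin p then
      pathWt a t p * (∑ r ∈ Finset.range ((pathHeight p n).toNat + 1), t ^ r) else 0)
    = (a + t + 1) ^ n := by
  induction n with
  | zero =>
    rw [Finset.univ_unique, Finset.sum_singleton]
    have h0 : pathHeight (default : Fin 0 → Step) 0 = 0 := by
      simp [pathHeight]
    have hp : IsPartialMotzkin (default : Fin 0 → Step) := by
      intro m hm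
      have : m = 0 := by omega
      subst this; rw [h0]
    rw [if_pos hp]
    simp [pathWt, h0]
  | succ n ih =>
    rw [← Equiv.sum_comp (snocE n), Fintype.sum_prod_type]
    have step : ∀ q : Fin n → Step,
        (∑ s : Step, if IsPartialMotzkin (snocE n (q, s)) then
          pathWt a t (snocE n (q, s)) *
            (∑ r ∈ Finset.range ((pathHeight (snocE n (q, s)) (n+1)).toNat + 1), t ^ r) else 0)
        = (a + t + 1) * (if IsPartialMotzkin q then
            pathWt a t q * (∑ r ∈ Finset.range ((pathHeight q n).toNat + 1), t ^ r) else 0) := by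
      intro q
      rw [sum_step]
      simp only [snocE, Equiv.coe_fn_mk, isPartial_snoc, pathHeight_snoc_top, pathWt_snoc]
      by_cases hq : IsPartialMotzkin q
      · have hq0 : 0 ≤ pathHeight q n := hq n le_rfl
        set h := pathHeight q n with hh
        simp only [hq, true_and, Step.val, Step.wt, if_true]
        rw [if_pos (by omega : (0:ℤ) ≤ h + 1), if_pos (by omega : (0:ℤ) ≤ h + 0)]
        have e1 : (h + 1).toNat = h.toNat + 1 := by omega
        have e2 : (h + 0).toNat = h.toNat := by omega
        rw [e1, e2]
        by_cases hd : (0:ℤ) ≤ h + (-1)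
        · rw [if_pos hd]
          have e3 : (h + (-1)).toNat + 1 = h.toNat := by omega
          rw [e3]
          obtain ⟨m, hm⟩ : ∃ m, h.toNat = m + 1 := ⟨h.toNat - 1, by omega⟩
          rw [hm]
          rw [geom_sum_succ (n := m + 2), geom_sum_succ (n := m + 1)]
          ring
        · rw [if_neg hd]
          have e4 : h.toNat = 0 := by omega
          rw [e4]
          rw [geom_sum_succ (n := 1), geom_sum_succ (n := 0)]
          simp
          ring
      · simp [hq]
    rw [Finset.sum_congr rfl (fun q _ => step q), ← Finset.mul_sum, ih, pow_succ]
    ring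

lemma aux (k t a : ℕ) (hka : a + t + 1 = k) (n : ℕ) :
    ∑ j ∈ Finset.Icc 1 (n + 1),
        (∑ p ∈ Finset.univ.filter
          (fun p : Fin n → Step => IsPartialMotzkin p ∧ pathHeight p n = ((j-1 : ℕ) : ℤ)),
          pathWt a t p) * ∑ r ∈ Finset.range j, t ^ r =
      k ^ n := by
  have hmap : ∀ p ∈ Finset.univ.filter (fun p : Fin n → Step => IsPartialMotzkin p),
      (pathHeight p n).toNat + 1 ∈ Finset.Icc 1 (n + 1) := by
    intro p hp
    simp only [Finset.mem_filter] at hp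
    have h1 : 0 ≤ pathHeight p n := hp.2 n le_rfl
    have h2 := pathHeight_le p
    simp only [Finset.mem_Icc]
    omega
  have hstep : ∀ j ∈ Finset.Icc 1 (n + 1),
      (∑ p ∈ Finset.univ.filter
          (fun p : Fin n → Step => IsPartialMotzkin p ∧ pathHeight p n = ((j-1 : ℕ) : ℤ)),
          pathWt a t p) * ∑ r ∈ Finset.range j, t ^ r =
      ∑ p ∈ (Finset.univ.filter (fun p : Fin n → Step => IsPartialMotzkin p)).filter
          (fun p => (pathHeight p n).toNat + 1 = j),
        pathWt a t p * ∑ r ∈ Finset.range ((pathHeight p n).toNat + 1), t ^ r := by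
    intro j hj
    simp only [Finset.mem_Icc] at hj
    rw [Finset.sum_mul, Finset.filter_filter]
    apply Finset.sum_congr
    · apply Finset.filter_congr
      intro p _
      simp only [and_congr_right_iff]
      intro hp
      have h1 : 0 ≤ pathHeight p n := hp n le_rfl
      constructor <;> intro h <;> omega
    · intro p hp
      simp only [Finset.mem_filter] at hp
      rw [hp.2.2]
  rw [Finset.sum_congr rfl hstep, Finset.sum_fiberwise_of_maps_to hmap, ← hka]
  rw [← key a t n, Finset.sum_filter]


/-- `∑_{j=1}^i m_{i,j} (1 + t + ⋯ + t^{j-1}) = k^{i-1}`, where `m_{i,j}` is the total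
weight of partial `(k-t-1, t)`-Motzkin paths of length `i-1` ending at height `j-1`. -/
theorem stmt_9 (k t : ℕ) (ht : 1 ≤ t) (hk : t + 2 ≤ k) (i : ℕ) (hi : 1 ≤ i) :
    ∑ j ∈ Finset.Icc 1 i,
        partialWt (k - t - 1) t (i - 1) (j - 1) * ∑ r ∈ Finset.range j, t ^ r =
      k ^ (i - 1) := by
  obtain ⟨n, rfl⟩ : ∃ n, i = n + 1 := ⟨i - 1, by omega⟩
  exact aux k t (k - t - 1) (by omega) n
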